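/- Let H_{A_1},…,H_{A_n} and H_{B_1},…,H_{B_k} be finite-dimensional complex Hilbert spaces with ∏_j dim H_{A_j} = ∏_i dim H_{B_i}, let U : ⊗_j H_{A_j} → ⊗_i H_{B_i} be unitary, and let ρ^U be the CJ operator of the channel ρ ↦ UρU†, an operator on (⊗_i H_{B_i}) ⊗ (⊗_j H_{A_j}). Let S_1,…,S_k ⊆ {A_1,…,A_n} be subsets of the input systems such that for every i and every A_j ∉ S_i, the input A_j does not influence the output B_i. Then there exist, for each i = 1,…,k, a CJ operator ρ_{B_i|S_i} of a channel from ⊗_{A∈S_i} H_A to H_{B_i}, such that, with each ρ_{B_i|S_i} padded by identities on all other input and output tensor factors, the padded operators pairwise commute and ρ^U = ∏_{i=1}^k ρ_{B_i|S_i}. -/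

import Mathlib

open scoped Classical ComplexOrder
open BigOperators Matrix

noncomputable section

namespace QCM

abbrev Idx (ι : Type) (d : ι → ℕ) : Type := ∀ i, Fin (d i)

instance setFintypeOfFintype {α : Type} [Fintype α] (S : Set α) : Fintype ↥S :=
  (Set.toFinite S).fintype

def restr {ι : Type} (d : ι → ℕ) (S : Set ι) (f : Idx ι d) :
    Idx S (fun i => d i.1) := fun i => f i.1

def FactorsAs {ι : Type} (d : ι → ℕ) (S : Set ι)
    (M : Matrix (Idx ι d) (Idx ι d) ℂ)
    (N : Matrix (Idx S (fun i => d i.1)) (Idx S (fun i => d i.1)) ℂ) : Prop :=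
  ∀ f g : Idx ι d,
    M f g = if ∀ i, i ∉ S → f i = g i then N (restr d S f) (restr d S g) else 0

def ActsOn {ι : Type} (d : ι → ℕ) (S : Set ι)
    (M : Matrix (Idx ι d) (Idx ι d) ℂ) : Prop :=
  ∃ N, FactorsAs d S M N

def merge {ι : Type} (d : ι → ℕ) (K : Set ι)
    (x : Idx K (fun i => d i.1)) (y : Idx (Kᶜ : Set ι) (fun i => d i.1)) : Idx ι d :=
  fun i => if h : i ∈ K then x ⟨i, h⟩ else y ⟨i, h⟩

def marg {ι : Type} [Fintype ι] (d : ι → ℕ) (K : Set ι)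
    (M : Matrix (Idx ι d) (Idx ι d) ℂ) :
    Matrix (Idx K (fun i => d i.1)) (Idx K (fun i => d i.1)) ℂ :=
  fun f g => ∑ t : Idx (Kᶜ : Set ι) (fun i => d i.1), M (merge d K f t) (merge d K g t)

/-! ## CJ operators of unitary channels and no-influence conditions -/

/-- Combine joint indices over `ι` and over `κ` into one over `ι ⊕ κ`. -/
def sumIdx {ι κ : Type} {d : ι → ℕ} {e : κ → ℕ} (x : Idx ι d) (y : Idx κ e) :
    Idx (ι ⊕ κ) (Sum.elim d e) := fun j =>
  match j with
  | Sum.inl i => x i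
  | Sum.inr i => y i

/-- `U` is a unitary matrix (between possibly differently indexed spaces). -/
def IsUnitaryMat {ιo ιi : Type} [Fintype ιo] [Fintype ιi] (dO : ιo → ℕ) (dI : ιi → ℕ)
    (U : Matrix (Idx ιo dO) (Idx ιi dI) ℂ) : Prop :=
  Uᴴ * U = 1 ∧ U * Uᴴ = 1

/-- The CJ operator of the unitary channel `ρ ↦ U ρ U†`, an operator on
the outputs (left summand) tensored with the inputs (right summand). -/
def cjOp {ιo ιi : Type} (dO : ιo → ℕ) (dI : ιi → ℕ)
    (U : Matrix (Idx ιo dO) (Idx ιi dI) ℂ) :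
    Matrix (Idx (ιo ⊕ ιi) (Sum.elim dO dI)) (Idx (ιo ⊕ ιi) (Sum.elim dO dI)) ℂ :=
  fun f g =>
    U (fun i => f (Sum.inl i)) (fun i => f (Sum.inr i)) *
      star (U (fun i => g (Sum.inl i)) (fun i => g (Sum.inr i)))

/-- The input system `x` does not influence the (composite) output system `B` in the
unitary channel of `U`: the partial trace of the CJ operator of `U` over all output
factors other than those in `B` equals `M ⊗ 1` on the factor of `x`, for some CJ
operator `M` of a channel from the remaining inputs to `B`. -/
def NoInfl {ιo ιi : Type} [Fintype ιo] [Fintype ιi] (dO : ιo → ℕ) (dI : ιi → ℕ)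
    (U : Matrix (Idx ιo dO) (Idx ιi dI) ℂ) (x : ιi) (B : Set ιo) : Prop :=
  -- the kept factors: the outputs in `B` together with all inputs
  let K : Set (ιo ⊕ ιi) := {l | Sum.elim (fun b => b ∈ B) (fun _ => True) l}
  let dK : ↥K → ℕ := fun l => Sum.elim dO dI l.1
  -- the factors other than the one of input `x`
  let S : Set ↥K := {l | l.1 ≠ Sum.inr x}
  ∃ N : Matrix (Idx ↥S (fun l => dK l.1)) (Idx ↥S (fun l => dK l.1)) ℂ,
    FactorsAs dK S (marg (Sum.elim dO dI) K (cjOp dO dI U)) N ∧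
    N.PosSemidef ∧
    marg (fun l : ↥S => dK l.1) {l : ↥S | ∃ i : ιi, l.1.1 = Sum.inr i} N = 1


set_option linter.unusedSectionVars false

section IndAux

/-- Indicator of a proposition, with a pinned decidability instance. -/
def ind (P : Prop) : ℂ := @ite ℂ P (Classical.propDecidable P) 1 0

lemma ind_pos {P : Prop} (h : P) : ind P = 1 := by simp [ind, h]

lemma ind_neg {P : Prop} (h : ¬P) : ind P = 0 := by simp [ind, h]

lemma ind_congr {P Q : Prop} (h : P ↔ Q) : ind P = ind Q := by
  by_cases hP : P
  · rw [ind_pos hP, ind_pos (h.mp hP)]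
  · rw [ind_neg hP, ind_neg (fun hq => hP (h.mpr hq))]

lemma ind_mul_ind (P Q : Prop) : ind P * ind Q = ind (P ∧ Q) := by
  by_cases hP : P
  · by_cases hQ : Q
    · rw [ind_pos hP, ind_pos hQ, ind_pos ⟨hP, hQ⟩, one_mul]
    · rw [ind_neg hQ, mul_zero, ind_neg (fun h : P ∧ Q => hQ h.2)]
  · rw [ind_neg hP, zero_mul, ind_neg (fun h : P ∧ Q => hP h.1)]

lemma one_apply_ind {m : Type} [DecidableEq m] (a b : m) :
    (1 : Matrix m m ℂ) a b = ind (a = b) := by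
  by_cases h : a = b
  · subst h; rw [Matrix.one_apply_eq, ind_pos rfl]
  · rw [Matrix.one_apply_ne h, ind_neg h]

lemma sum_inst {α : Type} (i1 i2 : Fintype α) (F : α → ℂ) :
    @Finset.sum α ℂ _ (@Finset.univ α i1) F = @Finset.sum α ℂ _ (@Finset.univ α i2) F :=
  congrArg (fun i => @Finset.sum α ℂ _ (@Finset.univ α i) F) (Subsingleton.elim i1 i2)

lemma sum_collapse {α : Type*} [Fintype α] {p : α → Prop} (a₀ : α)
    (hp : ∀ a, p a → a = a₀) (hp₀ : p a₀) (F : α → ℂ) :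
    ∑ a, ind (p a) * F a = F a₀ := by
  rw [Finset.sum_eq_single a₀]
  · rw [ind_pos hp₀, one_mul]
  · intro a _ ha
    rw [ind_neg (fun h => ha (hp a h)), zero_mul]
  · intro h; exact absurd (Finset.mem_univ a₀) h

end IndAux

section Aux

variable {ι : Type} [Fintype ι] [DecidableEq ι] {d : ι → ℕ}

lemma merge_apply_mem (K : Set ι) (x : Idx K (fun i => d i.1))
    (y : Idx (Kᶜ : Set ι) (fun i => d i.1)) {i : ι} (h : i ∈ K) :
    merge d K x y i = x ⟨i, h⟩ := dif_pos h

lemma merge_apply_not_mem (K : Set ι) (x : Idx K (fun i => d i.1))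
    (y : Idx (Kᶜ : Set ι) (fun i => d i.1)) {i : ι} (h : i ∉ K) :
    merge d K x y i = y ⟨i, h⟩ := dif_neg h

lemma restr_merge (K : Set ι) (x : Idx K (fun i => d i.1))
    (y : Idx (Kᶜ : Set ι) (fun i => d i.1)) : restr d K (merge d K x y) = x := by
  funext l; exact dif_pos l.2

lemma restr_merge_compl (K : Set ι) (x : Idx K (fun i => d i.1))
    (y : Idx (Kᶜ : Set ι) (fun i => d i.1)) : restr d Kᶜ (merge d K x y) = y := by
  funext l; exact dif_neg l.2

def mergeEquiv (K : Set ι) :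
    (Idx K (fun i => d i.1) × Idx (Kᶜ : Set ι) (fun i => d i.1)) ≃ Idx ι d where
  toFun p := merge d K p.1 p.2
  invFun f := (restr d K f, restr d Kᶜ f)
  left_inv p := by
    ext1
    · exact restr_merge K p.1 p.2
    · exact restr_merge_compl K p.1 p.2
  right_inv f := by
    funext i
    by_cases h : i ∈ K
    · exact dif_pos h
    · exact dif_neg h

lemma sum_merge (K : Set ι) (F : Idx ι d → ℂ) :
    ∑ f : Idx ι d, F f
      = ∑ x : Idx K (fun i => d i.1), ∑ y : Idx (Kᶜ : Set ι) (fun i => d i.1),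
          F (merge d K x y) := by
  rw [← (mergeEquiv K).sum_comp F, Fintype.sum_prod_type]
  rfl

lemma sum_constr (K : Set ι) (x : Idx K (fun i => d i.1)) (F : Idx ι d → ℂ) :
    (∑ f : Idx ι d, ind (∀ i, (h : i ∈ K) → f i = x ⟨i, h⟩) * F f)
      = ∑ t : Idx (Kᶜ : Set ι) (fun i => d i.1), F (merge d K x t) := by
  rw [sum_merge K (fun f => ind (∀ i, (h : i ∈ K) → f i = x ⟨i, h⟩) * F f)]
  rw [Finset.sum_eq_single x]
  · apply Finset.sum_congr rfl
    intro t _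
    rw [ind_pos, one_mul]
    intro i h
    exact dif_pos h
  · intro x' _ hx'
    apply Finset.sum_eq_zero
    intro t _
    rw [ind_neg, zero_mul]
    intro hcond
    apply hx'
    funext l
    have := hcond l.1 l.2
    rw [merge_apply_mem K x' t l.2] at this
    exact this
  · intro h; exact absurd (Finset.mem_univ x) h

lemma marg_eq (K : Set ι) (M : Matrix (Idx ι d) (Idx ι d) ℂ)
    (u v : Idx K (fun i => d i.1)) :
    marg d K M u v
      = ∑ f : Idx ι d, ind (∀ i, (h : i ∈ K) → f i = u ⟨i, h⟩) *
          M f (merge d K v (restr d Kᶜ f)) := by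
  calc marg d K M u v
      = ∑ t : Idx (Kᶜ : Set ι) (fun i => d i.1), M (merge d K u t) (merge d K v t) :=
        sum_inst _ _ _
    _ = ∑ t : Idx (Kᶜ : Set ι) (fun i => d i.1),
          M (merge d K u t) (merge d K v (restr d Kᶜ (merge d K u t))) :=
        Finset.sum_congr rfl fun t _ => by rw [restr_merge_compl]
    _ = ∑ f : Idx ι d, ind (∀ i, (h : i ∈ K) → f i = u ⟨i, h⟩) *
          M f (merge d K v (restr d Kᶜ f)) :=
        (sum_constr K u (fun f => M f (merge d K v (restr d Kᶜ f)))).symm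

lemma sum_pin_all (f0 : Idx ι d) (G : Idx ι d → ℂ) :
    (∑ x : Idx ι d, ind (∀ l, x l = f0 l) * G x) = G f0 :=
  sum_collapse f0 (fun x h => funext h) (fun _ => rfl) G

lemma sum_ind_eq_one (K : Set ι) (i : ι) (hi : i ∈ K) (huniq : ∀ l ∈ K, l = i)
    (s : Fin (d i)) :
    (∑ t : Idx K (fun l => d l.1), ind (t ⟨i, hi⟩ = s)) = 1 := by
  have hcast : ∀ l : ↥K, Fin (d i) = Fin (d l.1) := fun l =>
    (congrArg (fun z => Fin (d z)) (huniq l.1 l.2)).symm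
  have key : ∀ t : Idx K (fun l => d l.1),
      t ⟨i, hi⟩ = s ↔ t = (fun l => cast (hcast l) s) := by
    intro t
    constructor
    · intro hts
      funext l
      obtain ⟨lv, hlv⟩ := l
      have hl : lv = i := huniq lv hlv
      subst hl
      have h1 : t ⟨lv, hlv⟩ = t ⟨lv, hi⟩ := rfl
      have h2 : cast (hcast ⟨lv, hlv⟩) s = s := cast_eq_iff_heq.mpr HEq.rfl
      rw [h1, hts, h2]
    · intro h
      rw [h]
      exact cast_eq_iff_heq.mpr HEq.rfl
  calc (∑ t : Idx K (fun l => d l.1), ind (t ⟨i, hi⟩ = s))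
      = ∑ t : Idx K (fun l => d l.1), ind (t ⟨i, hi⟩ = s) * 1 := by
        simp only [mul_one]
    _ = 1 := by
        rw [Finset.sum_congr rfl (fun t _ => by rw [ind_congr (key t)])]
        exact sum_collapse _ (fun t h => h) rfl (fun _ => (1:ℂ))

end Aux

section Aux2

@[simp] lemma sumIdx_inl {ι κ : Type} {d : ι → ℕ} {e : κ → ℕ} (x : Idx ι d) (y : Idx κ e)
    (i : ι) : sumIdx x y (Sum.inl i) = x i := rfl

@[simp] lemma sumIdx_inr {ι κ : Type} {d : ι → ℕ} {e : κ → ℕ} (x : Idx ι d) (y : Idx κ e)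
    (i : κ) : sumIdx x y (Sum.inr i) = y i := rfl

def sumEquiv {ι κ : Type} {d : ι → ℕ} {e : κ → ℕ} :
    (Idx ι d × Idx κ e) ≃ Idx (ι ⊕ κ) (Sum.elim d e) where
  toFun p := sumIdx p.1 p.2
  invFun f := (fun i => f (Sum.inl i), fun i => f (Sum.inr i))
  left_inv p := rfl
  right_inv f := by funext j; cases j <;> rfl

lemma sum_elim {ιo ιi : Type} [Fintype ιo] [Fintype ιi] [DecidableEq ιo] [DecidableEq ιi]
    {dO : ιo → ℕ} {dI : ιi → ℕ}
    (F : Idx (ιo ⊕ ιi) (Sum.elim dO dI) → ℂ) :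
    ∑ f, F f = ∑ x : Idx ιo dO, ∑ y : Idx ιi dI, F (sumIdx x y) := by
  rw [← sumEquiv.sum_comp F, Fintype.sum_prod_type]
  rfl

lemma unitary_entry1 {ιo ιi : Type} [Fintype ιo] [Fintype ιi] (dO : ιo → ℕ) (dI : ιi → ℕ)
    (U : Matrix (Idx ιo dO) (Idx ιi dI) ℂ) (hU : IsUnitaryMat dO dI U) (a a' : Idx ιi dI) :
    (∑ c : Idx ιo dO, U c a * star (U c a')) = ind (a' = a) := by
  have h := congrFun (congrFun hU.1 a') a
  rw [Matrix.mul_apply] at h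
  refine Eq.trans (Finset.sum_congr rfl fun c _ => ?_) (h.trans ?_)
  · rw [Matrix.conjTranspose_apply]; ring
  · by_cases haa : a' = a
    · subst haa; rw [Matrix.one_apply_eq, ind_pos rfl]
    · rw [Matrix.one_apply_ne haa, ind_neg haa]

lemma unitary_entry2 {ιo ιi : Type} [Fintype ιo] [Fintype ιi] (dO : ιo → ℕ) (dI : ιi → ℕ)
    (U : Matrix (Idx ιo dO) (Idx ιi dI) ℂ) (hU : IsUnitaryMat dO dI U) (q d : Idx ιo dO) :
    (∑ y : Idx ιi dI, star (U q y) * U d y) = ind (d = q) := by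
  have h := congrFun (congrFun hU.2 d) q
  rw [Matrix.mul_apply] at h
  refine Eq.trans (Finset.sum_congr rfl fun y _ => ?_) (h.trans ?_)
  · rw [Matrix.conjTranspose_apply]; ring
  · by_cases hdq : d = q
    · subst hdq; rw [Matrix.one_apply_eq, ind_pos rfl]
    · rw [Matrix.one_apply_ne hdq, ind_neg hdq]

end Aux2
section QQ

variable {n k : ℕ} {dA : Fin n → ℕ} {dB : Fin k → ℕ}

/-- Override `c` by `w` on `T`. -/
def ext2 (T : Set (Fin k)) (w c : Idx (Fin k) dB) : Idx (Fin k) dB :=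
  fun l => if l ∈ T then w l else c l

lemma ext2_mem {T : Set (Fin k)} {w c : Idx (Fin k) dB} {l : Fin k} (h : l ∈ T) :
    ext2 T w c l = w l := if_pos h

lemma ext2_not_mem {T : Set (Fin k)} {w c : Idx (Fin k) dB} {l : Fin k} (h : l ∉ T) :
    ext2 T w c l = c l := if_neg h

/-- The padded marginal operator of the CJ operator of `U`, keeping the outputs in `T`. -/
def QQ (U : Matrix (Idx (Fin k) dB) (Idx (Fin n) dA) ℂ) (T : Set (Fin k)) :
    Matrix (Idx (Fin k ⊕ Fin n) (Sum.elim dB dA))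
      (Idx (Fin k ⊕ Fin n) (Sum.elim dB dA)) ℂ :=
  fun f g =>
    ind (∀ l, l ∉ T → f (Sum.inl l) = g (Sum.inl l)) *
      ∑ c : Idx (Fin k) dB,
        ind (∀ l ∈ T, c l = f (Sum.inl l)) *
          (U c (fun j => f (Sum.inr j)) *
            star (U (ext2 T (fun l => g (Sum.inl l)) c) (fun j => g (Sum.inr j))))

lemma hUU_aux (U : Matrix (Idx (Fin k) dB) (Idx (Fin n) dA) ℂ)
    (hU : IsUnitaryMat dB dA U) (a a' : Idx (Fin n) dA) :
    (∑ c : Idx (Fin k) dB, U c a * star (U c a')) = ind (a' = a) :=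
  Eq.trans (sum_inst _ _ _) (unitary_entry1 dB dA U hU a a')

lemma hUU_aux2 (U : Matrix (Idx (Fin k) dB) (Idx (Fin n) dA) ℂ)
    (hU : IsUnitaryMat dB dA U) (q d : Idx (Fin k) dB) :
    (∑ y : Idx (Fin n) dA, star (U q y) * U d y) = ind (d = q) :=
  Eq.trans (sum_inst _ _ _) (unitary_entry2 dB dA U hU q d)

lemma QQ_univ (U : Matrix (Idx (Fin k) dB) (Idx (Fin n) dA) ℂ) :
    QQ U Set.univ = cjOp dB dA U := by
  funext f g
  unfold QQ
  rw [ind_pos (fun l hl => absurd (Set.mem_univ l) hl), one_mul]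
  have e1 : ∀ c : Idx (Fin k) dB,
      (∀ l ∈ Set.univ, c l = f (Sum.inl l)) ↔ (∀ l, c l = f (Sum.inl l)) :=
    fun c => ⟨fun h l => h l (Set.mem_univ l), fun h l _ => h l⟩
  refine Eq.trans (Finset.sum_congr rfl fun c _ => by rw [ind_congr (e1 c)]) ?_
  refine Eq.trans (sum_pin_all (d := dB) (fun l => f (Sum.inl l))
    (fun c => U c (fun j => f (Sum.inr j)) *
      star (U (ext2 Set.univ (fun l => g (Sum.inl l)) c) (fun j => g (Sum.inr j))))) ?_
  have e2 : ext2 Set.univ (fun l => g (Sum.inl l)) (fun l => f (Sum.inl l))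
      = fun l => g (Sum.inl l) := funext fun l => ext2_mem (Set.mem_univ l)
  erw [e2]
  rfl

lemma QQ_empty (U : Matrix (Idx (Fin k) dB) (Idx (Fin n) dA) ℂ)
    (hU : IsUnitaryMat dB dA U) : QQ U (∅ : Set (Fin k)) = 1 := by
  funext f g
  unfold QQ
  have e0 : ∀ c : Idx (Fin k) dB,
      ind (∀ l ∈ (∅ : Set (Fin k)), c l = f (Sum.inl l)) *
        (U c (fun j => f (Sum.inr j)) *
          star (U (ext2 (∅ : Set (Fin k)) (fun l => g (Sum.inl l)) c) (fun j => g (Sum.inr j))))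
      = U c (fun j => f (Sum.inr j)) * star (U c (fun j => g (Sum.inr j))) := by
    intro c
    have e1 : ext2 (∅ : Set (Fin k)) (fun l => g (Sum.inl l)) c = c :=
      funext fun l => ext2_not_mem (Set.notMem_empty l)
    erw [ind_pos (fun l hl => absurd hl (Set.notMem_empty l)), one_mul, e1]
  refine Eq.trans (congrArg _ (Finset.sum_congr rfl fun c _ => e0 c)) ?_
  have e3 : (∑ c : Idx (Fin k) dB,
      U c (fun j => f (Sum.inr j)) * star (U c (fun j => g (Sum.inr j))))
      = ind ((fun j => g (Sum.inr j)) = (fun j => f (Sum.inr j))) :=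
    hUU_aux U hU _ _
  rw [e3, one_apply_ind, ind_mul_ind]
  apply ind_congr
  constructor
  · rintro ⟨h1, h2⟩
    funext j
    cases j with
    | inl l => exact h1 l (Set.notMem_empty l)
    | inr j => exact (congrFun h2 j).symm
  · intro h
    exact ⟨fun l _ => congrFun h (Sum.inl l),
      funext fun j => (congrFun h (Sum.inr j)).symm⟩

lemma QQ_mul (U : Matrix (Idx (Fin k) dB) (Idx (Fin n) dA) ℂ)
    (hU : IsUnitaryMat dB dA U) {S T : Set (Fin k)} (hST : Disjoint S T) :
    QQ U S * QQ U T = QQ U (S ∪ T) := by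
  have hST' : ∀ l, l ∈ S → l ∉ T := fun l hl => Set.disjoint_left.mp hST hl
  funext f g
  rw [Matrix.mul_apply]
  rw [sum_elim (fun h => QQ U S f h * QQ U T h g)]
  set x₀ : Idx (Fin k) dB := fun l => if l ∈ S then g (Sum.inl l) else f (Sum.inl l)
    with hx₀def
  have hx₀S : ∀ l ∈ S, x₀ l = g (Sum.inl l) := fun l hl => if_pos hl
  have hx₀n : ∀ l, l ∉ S → x₀ l = f (Sum.inl l) := fun l hl => if_neg hl
  by_cases hC : ∀ l, l ∉ S ∪ T → f (Sum.inl l) = g (Sum.inl l)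
  case neg =>
    have hR : QQ U (S ∪ T) f g = 0 := by unfold QQ; rw [ind_neg hC, zero_mul]
    rw [hR]
    apply Finset.sum_eq_zero; intro x _
    apply Finset.sum_eq_zero; intro y _
    push_neg at hC
    obtain ⟨l, hl, hfg⟩ := hC
    have hlS : l ∉ S := fun h => hl (Set.mem_union_left _ h)
    have hlT : l ∉ T := fun h => hl (Set.mem_union_right _ h)
    by_cases hx : x l = f (Sum.inl l)
    · have h0 : QQ U T (sumIdx x y) g = 0 := by
        unfold QQ
        rw [ind_neg, zero_mul]
        intro hcond
        exact hfg (hx.symm.trans (hcond l hlT))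
      rw [h0, mul_zero]
    · have h0 : QQ U S f (sumIdx x y) = 0 := by
        unfold QQ
        rw [ind_neg, zero_mul]
        intro hcond
        exact hx (hcond l hlS).symm
      rw [h0, zero_mul]
  case pos =>
    rw [Finset.sum_eq_single x₀]
    rotate_left
    · intro x _ hx
      apply Finset.sum_eq_zero; intro y _
      obtain ⟨l, hl⟩ : ∃ l, x l ≠ x₀ l := by
        by_contra hno; push_neg at hno; exact hx (funext hno)
      by_cases hlS : l ∈ S
      · have h0 : QQ U T (sumIdx x y) g = 0 := by
          unfold QQ; rw [ind_neg, zero_mul]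
          intro hcond
          exact hl ((hcond l (hST' l hlS)).trans (hx₀S l hlS).symm)
        rw [h0, mul_zero]
      · have h0 : QQ U S f (sumIdx x y) = 0 := by
          unfold QQ; rw [ind_neg, zero_mul]
          intro hcond
          exact hl ((hcond l hlS).symm.trans (hx₀n l hlS).symm)
        rw [h0, zero_mul]
    · intro h; exact absurd (Finset.mem_univ x₀) h
    -- main computation
    unfold QQ
    have h1 : ∀ l, l ∉ S → f (Sum.inl l) = x₀ l := fun l hl => (hx₀n l hl).symm
    have h2 : ∀ l, l ∉ T → x₀ l = g (Sum.inl l) := by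
      intro l hlT
      by_cases hlS : l ∈ S
      · exact hx₀S l hlS
      · rw [hx₀n l hlS]
        exact hC l (fun hm => hm.elim (fun h => hlS h) (fun h => hlT h))
    have main : ∀ y : Idx (Fin n) dA,
        (ind (∀ l, l ∉ S → f (Sum.inl l) = x₀ l) *
          ∑ c : Idx (Fin k) dB, ind (∀ l ∈ S, c l = f (Sum.inl l)) *
            (U c (fun j => f (Sum.inr j)) * star (U (ext2 S x₀ c) y))) *
        (ind (∀ l, l ∉ T → x₀ l = g (Sum.inl l)) *
          ∑ d : Idx (Fin k) dB, ind (∀ l ∈ T, d l = x₀ l) *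
            (U d y * star (U (ext2 T (fun l => g (Sum.inl l)) d) (fun j => g (Sum.inr j)))))
        = ∑ c : Idx (Fin k) dB, ∑ d : Idx (Fin k) dB,
            (ind (∀ l ∈ S, c l = f (Sum.inl l)) * ind (∀ l ∈ T, d l = x₀ l)) *
              ((star (U (ext2 S x₀ c) y) * U d y) *
                (U c (fun j => f (Sum.inr j)) *
                  star (U (ext2 T (fun l => g (Sum.inl l)) d) (fun j => g (Sum.inr j))))) := by
      intro y
      rw [ind_pos h1, one_mul, ind_pos h2, one_mul, Finset.sum_mul_sum]
      refine Finset.sum_congr rfl fun c _ => Finset.sum_congr rfl fun d _ => by ring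
    refine Eq.trans (Finset.sum_congr rfl fun y _ => main y) ?_
    rw [Finset.sum_comm]
    refine Eq.trans (Finset.sum_congr rfl fun c _ => Finset.sum_comm) ?_
    have huu : ∀ q d : Idx (Fin k) dB, (∑ y, star (U q y) * U d y) = ind (d = q) :=
      fun q d => hUU_aux2 U hU q d
    have step4 : ∀ c : Idx (Fin k) dB,
        (∑ d : Idx (Fin k) dB, ∑ y : Idx (Fin n) dA,
          (ind (∀ l ∈ S, c l = f (Sum.inl l)) * ind (∀ l ∈ T, d l = x₀ l)) *
            ((star (U (ext2 S x₀ c) y) * U d y) *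
              (U c (fun j => f (Sum.inr j)) *
                star (U (ext2 T (fun l => g (Sum.inl l)) d) (fun j => g (Sum.inr j))))))
        = ind (∀ l ∈ S ∪ T, c l = f (Sum.inl l)) *
            (U c (fun j => f (Sum.inr j)) *
              star (U (ext2 (S ∪ T) (fun l => g (Sum.inl l)) c) (fun j => g (Sum.inr j)))) := by
      intro c
      have hy : ∀ d : Idx (Fin k) dB,
          (∑ y : Idx (Fin n) dA,
            (ind (∀ l ∈ S, c l = f (Sum.inl l)) * ind (∀ l ∈ T, d l = x₀ l)) *
              ((star (U (ext2 S x₀ c) y) * U d y) *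
                (U c (fun j => f (Sum.inr j)) *
                  star (U (ext2 T (fun l => g (Sum.inl l)) d) (fun j => g (Sum.inr j))))))
          = ind (d = ext2 S x₀ c) *
              ((ind (∀ l ∈ S, c l = f (Sum.inl l)) * ind (∀ l ∈ T, d l = x₀ l)) *
                (U c (fun j => f (Sum.inr j)) *
                  star (U (ext2 T (fun l => g (Sum.inl l)) d) (fun j => g (Sum.inr j))))) := by
        intro d
        calc (∑ y : Idx (Fin n) dA,
            (ind (∀ l ∈ S, c l = f (Sum.inl l)) * ind (∀ l ∈ T, d l = x₀ l)) *
              ((star (U (ext2 S x₀ c) y) * U d y) *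
                (U c (fun j => f (Sum.inr j)) *
                  star (U (ext2 T (fun l => g (Sum.inl l)) d) (fun j => g (Sum.inr j))))))
            = ∑ y : Idx (Fin n) dA,
                ((ind (∀ l ∈ S, c l = f (Sum.inl l)) * ind (∀ l ∈ T, d l = x₀ l)) *
                  (U c (fun j => f (Sum.inr j)) *
                    star (U (ext2 T (fun l => g (Sum.inl l)) d) (fun j => g (Sum.inr j))))) *
                  (star (U (ext2 S x₀ c) y) * U d y) :=
              Finset.sum_congr rfl fun y _ => by ring
          _ = ((ind (∀ l ∈ S, c l = f (Sum.inl l)) * ind (∀ l ∈ T, d l = x₀ l)) *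
                  (U c (fun j => f (Sum.inr j)) *
                    star (U (ext2 T (fun l => g (Sum.inl l)) d) (fun j => g (Sum.inr j))))) *
                (∑ y, star (U (ext2 S x₀ c) y) * U d y) := by
              rw [Finset.mul_sum]
          _ = _ := by rw [huu]; ring
      refine Eq.trans (Finset.sum_congr rfl fun d _ => hy d) ?_
      rw [sum_collapse (ext2 S x₀ c) (fun d h => h) rfl]
      -- now simplify the collapsed term
      have e1 : ind (∀ l ∈ T, ext2 S x₀ c l = x₀ l) = ind (∀ l ∈ T, c l = f (Sum.inl l)) := by
        apply ind_congr
        constructor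
        · intro h l hlT
          have hlS := fun hs => hST' l hs hlT
          have := h l hlT
          rw [ext2_not_mem hlS, hx₀n l hlS] at this
          exact this
        · intro h l hlT
          have hlS := fun hs => hST' l hs hlT
          rw [ext2_not_mem hlS, hx₀n l hlS]
          exact h l hlT
      have e2 : ext2 T (fun l => g (Sum.inl l)) (ext2 S x₀ c)
          = ext2 (S ∪ T) (fun l => g (Sum.inl l)) c := by
        funext l
        by_cases hlT : l ∈ T
        · erw [ext2_mem hlT, ext2_mem (Set.mem_union_right _ hlT)]
        · rw [ext2_not_mem hlT]
          by_cases hlS : l ∈ S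
          · erw [ext2_mem hlS, ext2_mem (Set.mem_union_left _ hlS), hx₀S l hlS]
          · erw [ext2_not_mem hlS,
              ext2_not_mem (fun hm : l ∈ S ∪ T => hm.elim (fun h => hlS h) (fun h => hlT h))]
      erw [e1, e2, ind_mul_ind]
      congr 1
      apply ind_congr
      constructor
      · rintro ⟨hS, hT⟩ l hl
        exact hl.elim (fun h => hS l h) (fun h => hT l h)
      · intro h
        exact ⟨fun l hl => h l (Set.mem_union_left _ hl),
          fun l hl => h l (Set.mem_union_right _ hl)⟩
    refine Eq.trans (Finset.sum_congr rfl fun c _ => step4 c) ?_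
    rw [ind_pos hC, one_mul]

end QQ
section QQ2

variable {n k : ℕ} {dA : Fin n → ℕ} {dB : Fin k → ℕ}

lemma QQ_comm (U : Matrix (Idx (Fin k) dB) (Idx (Fin n) dA) ℂ)
    (hU : IsUnitaryMat dB dA U) (i i' : Fin k) :
    Commute (QQ U {i}) (QQ U {i'}) := by
  by_cases h : i = i'
  · subst h; exact Commute.refl _
  · have hd : Disjoint ({i} : Set (Fin k)) {i'} := by
      rw [Set.disjoint_singleton]
      exact h
    unfold Commute SemiconjBy
    rw [QQ_mul U hU hd, QQ_mul U hU hd.symm, Set.union_comm]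

lemma QQ_noncommProd (U : Matrix (Idx (Fin k) dB) (Idx (Fin n) dA) ℂ)
    (hU : IsUnitaryMat dB dA U) (s : Finset (Fin k)) :
    s.noncommProd (fun i => QQ U {i}) (fun a _ b _ _ => QQ_comm U hU a b)
      = QQ U (↑s : Set (Fin k)) := by
  induction s using Finset.induction_on with
  | empty =>
    erw [Finset.noncommProd_empty, Finset.coe_empty]
    exact (QQ_empty U hU).symm
  | @insert a s ha ih =>
    erw [Finset.noncommProd_insert_of_notMem _ _ _ _ ha, ih]
    have hd : Disjoint ({a} : Set (Fin k)) (↑s : Set (Fin k)) := by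
      rw [Set.disjoint_singleton_left]
      simpa using ha
    rw [QQ_mul U hU hd, Finset.coe_insert, Set.insert_eq]

lemma star_ind (P : Prop) : star (ind P) = ind P := by
  by_cases h : P
  · rw [ind_pos h]; exact star_one ℂ
  · rw [ind_neg h]; exact star_zero ℂ

lemma QQ_alt (U : Matrix (Idx (Fin k) dB) (Idx (Fin n) dA) ℂ) (T : Set (Fin k))
    (f g : Idx (Fin k ⊕ Fin n) (Sum.elim dB dA)) :
    QQ U T f g = ind (∀ l, l ∉ T → f (Sum.inl l) = g (Sum.inl l)) *
      ∑ t : Idx (↥(Tᶜ) : Type) (fun l => dB l.1),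
        U (merge dB T (fun l => f (Sum.inl l.1)) t) (fun j => f (Sum.inr j)) *
          star (U (merge dB T (fun l => g (Sum.inl l.1)) t) (fun j => g (Sum.inr j))) := by
  unfold QQ
  congr 1
  refine Eq.trans (sum_constr (d := dB) T (fun l => f (Sum.inl l.1)) (fun c =>
    U c (fun j => f (Sum.inr j)) *
      star (U (ext2 T (fun l => g (Sum.inl l)) c) (fun j => g (Sum.inr j))))) ?_
  refine Finset.sum_congr rfl fun t _ => ?_
  have e2 : ext2 T (fun l => g (Sum.inl l)) (merge dB T (fun l => f (Sum.inl l.1)) t)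
      = merge dB T (fun l => g (Sum.inl l.1)) t := by
    funext l
    by_cases hl : l ∈ T
    · erw [ext2_mem hl, merge_apply_mem T _ t hl]
    · erw [ext2_not_mem hl, merge_apply_not_mem T _ t hl, merge_apply_not_mem T _ t hl]
  erw [e2]

/-- Square-root factor witnessing positivity of `QQ`. -/
def AA (U : Matrix (Idx (Fin k) dB) (Idx (Fin n) dA) ℂ) (T : Set (Fin k)) :
    Matrix ((Idx (↥(Tᶜ) : Type) (fun l => dB l.1)) × (Idx (↥(Tᶜ) : Type) (fun l => dB l.1)))
      (Idx (Fin k ⊕ Fin n) (Sum.elim dB dA)) ℂ :=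
  fun p f => star (ind (∀ l, (h : l ∉ T) → f (Sum.inl l) = p.1 ⟨l, h⟩) *
    (U (merge dB T (fun l => f (Sum.inl l.1)) p.2) (fun j => f (Sum.inr j))))

lemma QQ_posSemidef (U : Matrix (Idx (Fin k) dB) (Idx (Fin n) dA) ℂ) (T : Set (Fin k)) :
    (QQ U T).PosSemidef := by
  have hrep : QQ U T = (AA U T)ᴴ * (AA U T) := by
    funext f g
    rw [QQ_alt, Matrix.mul_apply]
    have e1 : ∀ p, (AA U T)ᴴ f p * AA U T p g
        = ind (∀ l, (h : l ∉ T) → f (Sum.inl l) = p.1 ⟨l, h⟩) *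
            (ind (∀ l, (h : l ∉ T) → g (Sum.inl l) = p.1 ⟨l, h⟩) *
              (U (merge dB T (fun l => f (Sum.inl l.1)) p.2) (fun j => f (Sum.inr j)) *
                star (U (merge dB T (fun l => g (Sum.inl l.1)) p.2) (fun j => g (Sum.inr j))))) := by
      intro p
      rw [Matrix.conjTranspose_apply]
      unfold AA
      simp only [star_mul', star_star, star_ind]
      ring
    refine Eq.trans ?_ (Finset.sum_congr rfl fun p _ => (e1 p).symm)
    rw [Fintype.sum_prod_type]
    by_cases hC : ∀ l, l ∉ T → f (Sum.inl l) = g (Sum.inl l)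
    · rw [ind_pos hC, one_mul]
      symm
      refine Eq.trans (Finset.sum_eq_single (fun l : (↥(Tᶜ) : Type) => f (Sum.inl l.1))
        ?_ ?_) ?_
      · intro m _ hm
        apply Finset.sum_eq_zero
        intro t _
        rw [ind_neg, zero_mul]
        intro hcond
        exact hm (funext fun l => (hcond l.1 l.2).symm)
      · intro h; exact absurd (Finset.mem_univ _) h
      · refine Finset.sum_congr rfl fun t _ => ?_
        rw [ind_pos (fun l h => rfl), one_mul,
          ind_pos (fun l h => (hC l h).symm), one_mul]
    · rw [ind_neg hC, zero_mul]
      symm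
      apply Finset.sum_eq_zero
      intro m _
      apply Finset.sum_eq_zero
      intro t _
      by_cases hf : ∀ l, (h : l ∉ T) → f (Sum.inl l) = m ⟨l, h⟩
      · have hg : ¬ ∀ l, (h : l ∉ T) → g (Sum.inl l) = m ⟨l, h⟩ :=
          fun hcond => hC (fun l hl => (hf l hl).trans (hcond l hl).symm)
        rw [ind_neg hg, zero_mul, mul_zero]
      · rw [ind_neg hf, zero_mul]
  rw [hrep]
  exact Matrix.posSemidef_conjTranspose_mul_self (AA U T)

end QQ2
section QQ3

variable {n k : ℕ} {dA : Fin n → ℕ} {dB : Fin k → ℕ}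

lemma forall_singleton {P : Fin k → Prop} (i : Fin k) :
    (∀ l ∈ ({i} : Set (Fin k)), P l) ↔ P i :=
  ⟨fun h => h i rfl, fun h l hl => by rw [show l = i from hl]; exact h⟩

lemma QQ_marg_one (U : Matrix (Idx (Fin k) dB) (Idx (Fin n) dA) ℂ)
    (hU : IsUnitaryMat dB dA U) (i : Fin k) :
    marg (Sum.elim dB dA) {l | l ≠ Sum.inl i} (QQ U {i}) = 1 := by
  set K' : Set (Fin k ⊕ Fin n) := {l | l ≠ Sum.inl i} with hK'
  have hKi : Sum.inl i ∈ (K'ᶜ : Set (Fin k ⊕ Fin n)) := fun h => h rfl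
  have hKin : ∀ j : Fin n, Sum.inr j ∈ K' := fun j h => (by cases h)
  have hKout : ∀ l : Fin k, l ∉ ({i} : Set (Fin k)) → Sum.inl l ∈ K' :=
    fun l hl he => hl (Sum.inl.inj he)
  funext u v
  have hqq : ∀ t : Idx (K'ᶜ : Set (Fin k ⊕ Fin n)) (fun l => Sum.elim dB dA l.1),
      QQ U {i} (merge (Sum.elim dB dA) K' u t) (merge (Sum.elim dB dA) K' v t)
      = ind (∀ l, (hl : l ∉ ({i} : Set (Fin k))) →
            u ⟨Sum.inl l, hKout l hl⟩ = v ⟨Sum.inl l, hKout l hl⟩) *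
          ∑ c : Idx (Fin k) dB, ind (c i = t ⟨Sum.inl i, hKi⟩) *
            (U c (fun j => u ⟨Sum.inr j, hKin j⟩) *
              star (U c (fun j => v ⟨Sum.inr j, hKin j⟩))) := by
    intro t
    unfold QQ
    have hout : (∀ l, l ∉ ({i} : Set (Fin k)) →
        merge (Sum.elim dB dA) K' u t (Sum.inl l) = merge (Sum.elim dB dA) K' v t (Sum.inl l))
        ↔ (∀ l, (hl : l ∉ ({i} : Set (Fin k))) →
            u ⟨Sum.inl l, hKout l hl⟩ = v ⟨Sum.inl l, hKout l hl⟩) := by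
      constructor
      · intro h l hl
        have h2 := h l hl
        rw [merge_apply_mem K' u t (hKout l hl), merge_apply_mem K' v t (hKout l hl)] at h2
        exact h2
      · intro h l hl
        rw [merge_apply_mem K' u t (hKout l hl), merge_apply_mem K' v t (hKout l hl)]
        exact h l hl
    rw [ind_congr hout]
    congr 1
    refine Finset.sum_congr rfl fun c _ => ?_
    by_cases hc : c i = t ⟨Sum.inl i, hKi⟩
    · have hcond : ∀ l ∈ ({i} : Set (Fin k)), c l = merge (Sum.elim dB dA) K' u t (Sum.inl l) := by
        intro l hl
        rw [show l = i from hl, merge_apply_not_mem K' u t hKi]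
        exact hc
      rw [ind_pos hcond, ind_pos hc]
      congr 1
      have ef : (fun j => merge (Sum.elim dB dA) K' u t (Sum.inr j))
          = (fun j => u ⟨Sum.inr j, hKin j⟩) :=
        funext fun j => merge_apply_mem K' u t (hKin j)
      have eg : (fun j => merge (Sum.elim dB dA) K' v t (Sum.inr j))
          = (fun j => v ⟨Sum.inr j, hKin j⟩) :=
        funext fun j => merge_apply_mem K' v t (hKin j)
      have ec : ext2 ({i} : Set (Fin k))
          (fun l => merge (Sum.elim dB dA) K' v t (Sum.inl l)) c = c := by
        funext l
        by_cases hl : l ∈ ({i} : Set (Fin k))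
        · erw [ext2_mem hl, show l = i from hl, merge_apply_not_mem K' v t hKi]
          exact hc.symm
        · exact ext2_not_mem hl
      erw [ef, eg, ec]
    · have hcond : ¬ ∀ l ∈ ({i} : Set (Fin k)), c l = merge (Sum.elim dB dA) K' u t (Sum.inl l) := by
        intro h
        apply hc
        have h2 := h i rfl
        rw [merge_apply_not_mem K' u t hKi] at h2
        exact h2
      rw [ind_neg hcond, ind_neg hc, zero_mul, zero_mul]
  calc marg (Sum.elim dB dA) K' (QQ U {i}) u v
      = ∑ t : Idx (K'ᶜ : Set (Fin k ⊕ Fin n)) (fun l => Sum.elim dB dA l.1),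
          QQ U {i} (merge (Sum.elim dB dA) K' u t) (merge (Sum.elim dB dA) K' v t) :=
        sum_inst _ _ _
    _ = ∑ t : Idx (K'ᶜ : Set (Fin k ⊕ Fin n)) (fun l => Sum.elim dB dA l.1),
          ind (∀ l, (hl : l ∉ ({i} : Set (Fin k))) →
            u ⟨Sum.inl l, hKout l hl⟩ = v ⟨Sum.inl l, hKout l hl⟩) *
          ∑ c : Idx (Fin k) dB, ind (c i = t ⟨Sum.inl i, hKi⟩) *
            (U c (fun j => u ⟨Sum.inr j, hKin j⟩) *
              star (U c (fun j => v ⟨Sum.inr j, hKin j⟩))) :=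
        Finset.sum_congr rfl fun t _ => hqq t
    _ = ind (∀ l, (hl : l ∉ ({i} : Set (Fin k))) →
            u ⟨Sum.inl l, hKout l hl⟩ = v ⟨Sum.inl l, hKout l hl⟩) *
          ∑ t : Idx (K'ᶜ : Set (Fin k ⊕ Fin n)) (fun l => Sum.elim dB dA l.1),
          ∑ c : Idx (Fin k) dB, ind (c i = t ⟨Sum.inl i, hKi⟩) *
            (U c (fun j => u ⟨Sum.inr j, hKin j⟩) *
              star (U c (fun j => v ⟨Sum.inr j, hKin j⟩))) := by
        rw [Finset.mul_sum]
    _ = ind (∀ l, (hl : l ∉ ({i} : Set (Fin k))) →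
            u ⟨Sum.inl l, hKout l hl⟩ = v ⟨Sum.inl l, hKout l hl⟩) *
          ∑ c : Idx (Fin k) dB,
          ∑ t : Idx (K'ᶜ : Set (Fin k ⊕ Fin n)) (fun l => Sum.elim dB dA l.1),
            ind (c i = t ⟨Sum.inl i, hKi⟩) *
            (U c (fun j => u ⟨Sum.inr j, hKin j⟩) *
              star (U c (fun j => v ⟨Sum.inr j, hKin j⟩))) := by
        rw [Finset.sum_comm]
    _ = ind (∀ l, (hl : l ∉ ({i} : Set (Fin k))) →
            u ⟨Sum.inl l, hKout l hl⟩ = v ⟨Sum.inl l, hKout l hl⟩) *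
          ∑ c : Idx (Fin k) dB,
            (U c (fun j => u ⟨Sum.inr j, hKin j⟩) *
              star (U c (fun j => v ⟨Sum.inr j, hKin j⟩))) := by
        congr 1
        refine Finset.sum_congr rfl fun c _ => ?_
        calc (∑ t : Idx (K'ᶜ : Set (Fin k ⊕ Fin n)) (fun l => Sum.elim dB dA l.1),
              ind (c i = t ⟨Sum.inl i, hKi⟩) *
              (U c (fun j => u ⟨Sum.inr j, hKin j⟩) *
                star (U c (fun j => v ⟨Sum.inr j, hKin j⟩))))
            = (U c (fun j => u ⟨Sum.inr j, hKin j⟩) *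
                star (U c (fun j => v ⟨Sum.inr j, hKin j⟩))) *
              ∑ t : Idx (K'ᶜ : Set (Fin k ⊕ Fin n)) (fun l => Sum.elim dB dA l.1),
                ind (t ⟨Sum.inl i, hKi⟩ = c i) := by
              rw [Finset.mul_sum]
              exact Finset.sum_congr rfl fun t _ => by rw [mul_comm]; exact congrArg _ (ind_congr eq_comm)
          _ = (U c (fun j => u ⟨Sum.inr j, hKin j⟩) *
                star (U c (fun j => v ⟨Sum.inr j, hKin j⟩))) := by
              rw [sum_ind_eq_one (d := Sum.elim dB dA) (K'ᶜ : Set (Fin k ⊕ Fin n)) (Sum.inl i) hKi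
                (fun l hl => not_not.mp hl) (c i), mul_one]
    _ = ind (∀ l, (hl : l ∉ ({i} : Set (Fin k))) →
            u ⟨Sum.inl l, hKout l hl⟩ = v ⟨Sum.inl l, hKout l hl⟩) *
          ind ((fun j => v ⟨Sum.inr j, hKin j⟩) = (fun j => u ⟨Sum.inr j, hKin j⟩)) := by
        erw [hUU_aux U hU _ _]
        rfl
    _ = (1 : Matrix (Idx (K' : Set (Fin k ⊕ Fin n)) (fun l => Sum.elim dB dA l.1))
          (Idx (K' : Set (Fin k ⊕ Fin n)) (fun l => Sum.elim dB dA l.1)) ℂ) u v := by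
        by_cases huv : u = v
        · subst huv
          rw [Matrix.one_apply_eq, ind_pos (fun l hl => rfl), ind_pos rfl, one_mul]
        · rw [Matrix.one_apply_ne huv]
          obtain ⟨l, hl⟩ : ∃ l, u l ≠ v l := by
            by_contra hno; push_neg at hno; exact huv (funext hno)
          obtain ⟨lv, hlv⟩ := l
          cases lv with
          | inl l' =>
            have hl' : l' ∉ ({i} : Set (Fin k)) := fun h => hlv (by rw [show l' = i from h])
            rw [ind_neg (fun hcond => hl (hcond l' hl')), zero_mul]
          | inr j =>
            rw [ind_neg (fun hcond : (fun j => v ⟨Sum.inr j, hKin j⟩) = (fun j => u ⟨Sum.inr j, hKin j⟩) =>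
              hl (congrFun hcond j).symm), mul_zero]

end QQ3
section QQ4

variable {n k : ℕ} {dA : Fin n → ℕ} {dB : Fin k → ℕ}

lemma QQ_single (U : Matrix (Idx (Fin k) dB) (Idx (Fin n) dA) ℂ) (i : Fin k)
    (f g : Idx (Fin k ⊕ Fin n) (Sum.elim dB dA)) :
    QQ U {i} f g
      = ind (∀ l, l ∉ ({i} : Set (Fin k)) → f (Sum.inl l) = g (Sum.inl l)) *
        marg (Sum.elim dB dA)
          {l | Sum.elim (fun b => b ∈ ({i} : Set (Fin k))) (fun _ => True) l}
          (cjOp dB dA U)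
          (restr (Sum.elim dB dA)
            {l | Sum.elim (fun b => b ∈ ({i} : Set (Fin k))) (fun _ => True) l} f)
          (restr (Sum.elim dB dA)
            {l | Sum.elim (fun b => b ∈ ({i} : Set (Fin k))) (fun _ => True) l} g) := by
  set Ki : Set (Fin k ⊕ Fin n) :=
    {l | Sum.elim (fun b => b ∈ ({i} : Set (Fin k))) (fun _ => True) l} with hKidef
  have hKii : Sum.inl i ∈ Ki := rfl
  have hKir : ∀ j : Fin n, Sum.inr j ∈ Ki := fun j => trivial
  set uR := restr (Sum.elim dB dA) Ki f with huR
  set vR := restr (Sum.elim dB dA) Ki g with hvR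
  set y₀ : Idx (Fin n) dA := fun j => f (Sum.inr j) with hy₀
  have hmarg : marg (Sum.elim dB dA) Ki (cjOp dB dA U) uR vR
      = ∑ c : Idx (Fin k) dB,
          ind (∀ l ∈ ({i} : Set (Fin k)), c l = f (Sum.inl l)) *
            (U c (fun j => f (Sum.inr j)) *
              star (U (ext2 ({i} : Set (Fin k)) (fun l => g (Sum.inl l)) c)
                (fun j => g (Sum.inr j)))) := by
    have hev : ∀ x : Idx (Fin k) dB,
        cjOp dB dA U (sumIdx x y₀)
          (merge (Sum.elim dB dA) Ki vR (restr (Sum.elim dB dA) Kiᶜ (sumIdx x y₀)))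
        = U x (fun j => f (Sum.inr j)) *
            star (U (ext2 ({i} : Set (Fin k)) (fun l => g (Sum.inl l)) x)
              (fun j => g (Sum.inr j))) := by
      intro x
      unfold cjOp
      have e1 : (fun l => merge (Sum.elim dB dA) Ki vR
            (restr (Sum.elim dB dA) Kiᶜ (sumIdx x y₀)) (Sum.inl l))
          = ext2 ({i} : Set (Fin k)) (fun l => g (Sum.inl l)) x := by
        funext l
        by_cases hl : l ∈ ({i} : Set (Fin k))
        · erw [ext2_mem hl]
          exact merge_apply_mem Ki vR _ hl
        · erw [ext2_not_mem hl]
          exact merge_apply_not_mem Ki vR _ hl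
      have e2 : (fun j => merge (Sum.elim dB dA) Ki vR
            (restr (Sum.elim dB dA) Kiᶜ (sumIdx x y₀)) (Sum.inr j))
          = (fun j => g (Sum.inr j)) :=
        funext fun j => merge_apply_mem Ki vR _ (hKir j)
      rw [e1, e2]
      rfl
    calc marg (Sum.elim dB dA) Ki (cjOp dB dA U) uR vR
        = ∑ h : Idx (Fin k ⊕ Fin n) (Sum.elim dB dA),
            ind (∀ l, (hm : l ∈ Ki) → h l = uR ⟨l, hm⟩) *
              cjOp dB dA U h
                (merge (Sum.elim dB dA) Ki vR (restr (Sum.elim dB dA) Kiᶜ h)) :=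
          marg_eq Ki (cjOp dB dA U) uR vR
      _ = ∑ x : Idx (Fin k) dB, ∑ y : Idx (Fin n) dA,
            ind (∀ l, (hm : l ∈ Ki) → sumIdx x y l = uR ⟨l, hm⟩) *
              cjOp dB dA U (sumIdx x y)
                (merge (Sum.elim dB dA) Ki vR (restr (Sum.elim dB dA) Kiᶜ (sumIdx x y))) :=
          sum_elim _
      _ = ∑ x : Idx (Fin k) dB, ∑ y : Idx (Fin n) dA,
            ind (∀ j, y j = y₀ j) *
              (ind (x i = f (Sum.inl i)) *
                cjOp dB dA U (sumIdx x y)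
                  (merge (Sum.elim dB dA) Ki vR (restr (Sum.elim dB dA) Kiᶜ (sumIdx x y)))) := by
          refine Finset.sum_congr rfl fun x _ => Finset.sum_congr rfl fun y _ => ?_
          have hiff : (∀ l, (hm : l ∈ Ki) → sumIdx x y l = uR ⟨l, hm⟩)
              ↔ ((∀ j, y j = y₀ j) ∧ x i = f (Sum.inl i)) := by
            constructor
            · intro h
              exact ⟨fun j => h (Sum.inr j) (hKir j), h (Sum.inl i) hKii⟩
            · rintro ⟨h1, h2⟩ l hm
              cases l with
              | inl b =>
                have hb : b = i := hm
                subst hb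
                exact h2
              | inr j => exact h1 j
          rw [ind_congr hiff, ← ind_mul_ind, mul_assoc]
      _ = ∑ x : Idx (Fin k) dB,
            ind (x i = f (Sum.inl i)) *
              cjOp dB dA U (sumIdx x y₀)
                (merge (Sum.elim dB dA) Ki vR (restr (Sum.elim dB dA) Kiᶜ (sumIdx x y₀))) :=
          Finset.sum_congr rfl fun x _ =>
            sum_collapse y₀ (fun y h => funext h) (fun _ => rfl) _
      _ = ∑ c : Idx (Fin k) dB,
            ind (∀ l ∈ ({i} : Set (Fin k)), c l = f (Sum.inl l)) *
              (U c (fun j => f (Sum.inr j)) *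
                star (U (ext2 ({i} : Set (Fin k)) (fun l => g (Sum.inl l)) c)
                  (fun j => g (Sum.inr j)))) := by
          refine Finset.sum_congr rfl fun x _ => ?_
          rw [hev x, ind_congr (forall_singleton (P := fun l => x l = f (Sum.inl l)) i).symm]
  unfold QQ
  rw [hmarg]

end QQ4
section Inv

lemma matrix_inv {β : Type} [Fintype β] [DecidableEq β] {dk : β → ℕ}
    (M : Matrix (∀ b, Fin (dk b)) (∀ b, Fin (dk b)) ℂ) (P : Set β)
    (hM : ∀ p, p ∈ P → ∀ (u v : ∀ b, Fin (dk b)) (a c : Fin (dk p)),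
      M (Function.update u p a) (Function.update v p a)
        = M (Function.update u p c) (Function.update v p c))
    (u' v' : ∀ b, Fin (dk b)) (hd' : ∀ p ∈ P, u' p = v' p) :
    ∀ s : Finset β, ↑s ⊆ P →
      ∀ u v : ∀ b, Fin (dk b), (∀ b, b ∉ s → u b = u' b) → (∀ b, b ∉ s → v b = v' b) →
        (∀ p ∈ P, u p = v p) → M u v = M u' v' := by
  intro s
  induction s using Finset.induction_on with
  | empty =>
    intro _ u v hu hv _
    have hu' : u = u' := funext fun b => hu b (Finset.notMem_empty b)
    have hv' : v = v' := funext fun b => hv b (Finset.notMem_empty b)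
    rw [hu', hv']
  | @insert p s hp ih =>
    intro hsub u v hu hv hdiag
    have hpP : p ∈ P := hsub (Finset.mem_coe.mpr (Finset.mem_insert_self p s))
    have h1 : M u v = M (Function.update u p (u' p)) (Function.update v p (u' p)) := by
      have e1 : M u v = M (Function.update u p (u p)) (Function.update v p (u p)) := by
        rw [Function.update_eq_self]
        rw [show Function.update v p (u p) = v by rw [hdiag p hpP, Function.update_eq_self]]
      rw [e1]
      exact hM p hpP u v (u p) (u' p)
    rw [h1]
    refine ih (fun b hb => hsub (Finset.mem_coe.mpr
        (Finset.mem_insert_of_mem (Finset.mem_coe.mp hb)))) _ _ ?_ ?_ ?_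
    · intro b hb
      by_cases hbp : b = p
      · subst hbp; rw [Function.update_self]
      · rw [Function.update_of_ne hbp]
        exact hu b (fun hmem => (Finset.mem_insert.mp hmem).elim hbp hb)
    · intro b hb
      by_cases hbp : b = p
      · subst hbp; rw [Function.update_self]; exact hd' _ hpP
      · rw [Function.update_of_ne hbp]
        exact hv b (fun hmem => (Finset.mem_insert.mp hmem).elim hbp hb)
    · intro q hq
      by_cases hqp : q = p
      · subst hqp; rw [Function.update_self, Function.update_self]
      · rw [Function.update_of_ne hqp, Function.update_of_ne hqp]
        exact hdiag q hq

lemma matrix_inv' {β : Type} [Fintype β] [DecidableEq β] {dk : β → ℕ}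
    (M : Matrix (∀ b, Fin (dk b)) (∀ b, Fin (dk b)) ℂ) (P : Set β)
    (hM : ∀ p, p ∈ P → ∀ (u v : ∀ b, Fin (dk b)) (a c : Fin (dk p)),
      M (Function.update u p a) (Function.update v p a)
        = M (Function.update u p c) (Function.update v p c))
    (u v u' v' : ∀ b, Fin (dk b))
    (hu : ∀ b, b ∉ P → u b = u' b) (hv : ∀ b, b ∉ P → v b = v' b)
    (hdiag : ∀ p ∈ P, u p = v p) (hd' : ∀ p ∈ P, u' p = v' p) :
    M u v = M u' v' :=
  matrix_inv M P hM u' v' hd' (Finset.univ.filter (fun b => b ∈ P))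
    (fun b hb => by simpa using hb) u v
    (fun b hb => hu b (fun hbP => hb (by simpa using hbP)))
    (fun b hb => hv b (fun hbP => hb (by simpa using hbP))) hdiag

end Inv

section Acts

variable {n k : ℕ} {dA : Fin n → ℕ} {dB : Fin k → ℕ}

lemma QQ_actsOn (U : Matrix (Idx (Fin k) dB) (Idx (Fin n) dA) ℂ)
    (hpos : ∀ l : Fin k ⊕ Fin n, 0 < Sum.elim dB dA l) (i : Fin k) (Si : Set (Fin n))
    (hni : ∀ j : Fin n, j ∉ Si → NoInfl dB dA U j {i}) :
    ActsOn (Sum.elim dB dA) {l | l = Sum.inl i ∨ ∃ j ∈ Si, l = Sum.inr j} (QQ U {i}) := by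
  set Tset : Set (Fin k ⊕ Fin n) := {l | l = Sum.inl i ∨ ∃ j ∈ Si, l = Sum.inr j} with hTdef
  set Ki : Set (Fin k ⊕ Fin n) :=
    {l | Sum.elim (fun b => b ∈ ({i} : Set (Fin k))) (fun _ => True) l} with hKidef
  have houtT : ∀ l : Fin k, l ∉ ({i} : Set (Fin k)) → Sum.inl l ∉ Tset := by
    intro l hl hmem
    rcases hmem with h | ⟨j, _, h⟩
    · exact hl (Sum.inl.inj h)
    · exact (by cases h)
  have hinT : ∀ j : Fin n, j ∉ Si → Sum.inr j ∉ Tset := by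
    intro j hj hmem
    rcases hmem with h | ⟨j', hj', h⟩
    · exact (by cases h)
    · exact hj (by rw [show j = j' from Sum.inr.inj h]; exact hj')
  set d0 : Idx (Fin k ⊕ Fin n) (Sum.elim dB dA) := fun l => ⟨0, hpos l⟩ with hd0
  set exta : Idx Tset (fun l => Sum.elim dB dA l.1) → Idx (Fin k ⊕ Fin n) (Sum.elim dB dA) :=
    fun a l => if h : l ∈ Tset then a ⟨l, h⟩ else d0 l with hexta
  have hextmem : ∀ a l (h : l ∈ Tset), exta a l = a ⟨l, h⟩ := fun a l h => dif_pos h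
  have hextnot : ∀ a l, l ∉ Tset → exta a l = d0 l := fun a l h => dif_neg h
  refine ⟨fun a b => QQ U {i} (exta a) (exta b), ?_⟩
  intro f g
  by_cases hc : ∀ l, l ∉ Tset → f l = g l
  · rw [if_pos hc]
    set f' := exta (restr (Sum.elim dB dA) Tset f) with hf'
    set g' := exta (restr (Sum.elim dB dA) Tset g) with hg'
    have hf'T : ∀ l (h : l ∈ Tset), f' l = f l := fun l h => dif_pos h
    have hg'T : ∀ l (h : l ∈ Tset), g' l = g l := fun l h => dif_pos h
    have hf'n : ∀ l, l ∉ Tset → f' l = d0 l := fun l h => dif_neg h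
    have hg'n : ∀ l, l ∉ Tset → g' l = d0 l := fun l h => dif_neg h
    have houter : ∀ l, l ∉ ({i} : Set (Fin k)) → f (Sum.inl l) = g (Sum.inl l) :=
      fun l hl => hc (Sum.inl l) (houtT l hl)
    have houter' : ∀ l, l ∉ ({i} : Set (Fin k)) → f' (Sum.inl l) = g' (Sum.inl l) :=
      fun l hl => by rw [hf'n _ (houtT l hl), hg'n _ (houtT l hl)]
    show QQ U {i} f g = QQ U {i} f' g'
    rw [QQ_single U i f g, QQ_single U i f' g', ind_pos houter, ind_pos houter',
      one_mul, one_mul]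
    set P : Set (↥Ki) := {p | ∃ j, j ∉ Si ∧ p.1 = Sum.inr j} with hPdef
    have hM : ∀ p, p ∈ P → ∀ (u v : ∀ b : ↥Ki, Fin (Sum.elim dB dA b.1))
        (a c : Fin (Sum.elim dB dA p.1)),
        marg (Sum.elim dB dA) Ki (cjOp dB dA U)
            (Function.update u p a) (Function.update v p a)
          = marg (Sum.elim dB dA) Ki (cjOp dB dA U)
            (Function.update u p c) (Function.update v p c) := by
      intro p hp u v a c
      obtain ⟨j, hjSi, hpj⟩ := hp
      obtain ⟨Nj, hfac, -, -⟩ := hni j hjSi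
      have hqp : ∀ q : ↥Ki, q ∉ {l : ↥Ki | l.1 ≠ Sum.inr j} → q = p := by
        intro q hq
        exact Subtype.ext (by rw [not_not.mp hq, hpj])
      have hne : ∀ q : ↥({l : ↥Ki | l.1 ≠ Sum.inr j}), q.1 ≠ p := by
        intro q hqe
        exact q.2 (by rw [hqe, hpj])
      have hrestr : ∀ (w : ∀ b : ↥Ki, Fin (Sum.elim dB dA b.1)) (a : Fin (Sum.elim dB dA p.1)),
          restr (fun l : ↥Ki => Sum.elim dB dA l.1) {l : ↥Ki | l.1 ≠ Sum.inr j}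
              (Function.update w p a)
            = restr (fun l : ↥Ki => Sum.elim dB dA l.1) {l : ↥Ki | l.1 ≠ Sum.inr j} w :=
        fun w a => funext fun q =>
          show Function.update w p a q.1 = w q.1 from Function.update_of_ne (hne q) a w
      have hcnd : ∀ (w w' : ∀ b : ↥Ki, Fin (Sum.elim dB dA b.1)) (a : Fin (Sum.elim dB dA p.1)),
          ∀ q, q ∉ {l : ↥Ki | l.1 ≠ Sum.inr j} →
            Function.update w p a q = Function.update w' p a q := by
        intro w w' a q hq
        rw [hqp q hq, Function.update_self, Function.update_self]
      rw [hfac (Function.update u p a) (Function.update v p a),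
        hfac (Function.update u p c) (Function.update v p c),
        if_pos (hcnd u v a), if_pos (hcnd u v c), hrestr, hrestr, hrestr, hrestr]
    refine matrix_inv' (marg (Sum.elim dB dA) Ki (cjOp dB dA U)) P hM _ _ _ _ ?_ ?_ ?_ ?_
    · intro b hb
      have hbT : b.1 ∈ Tset := by
        obtain ⟨bv, hbm⟩ := b
        cases bv with
        | inl b' =>
          have : b' ∈ ({i} : Set (Fin k)) := hbm
          exact Or.inl (congrArg Sum.inl this)
        | inr j =>
          by_cases hj : j ∈ Si
          · exact Or.inr ⟨j, hj, rfl⟩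
          · exact absurd ⟨j, hj, rfl⟩ hb
      exact (hf'T b.1 hbT).symm
    · intro b hb
      have hbT : b.1 ∈ Tset := by
        obtain ⟨bv, hbm⟩ := b
        cases bv with
        | inl b' =>
          have : b' ∈ ({i} : Set (Fin k)) := hbm
          exact Or.inl (congrArg Sum.inl this)
        | inr j =>
          by_cases hj : j ∈ Si
          · exact Or.inr ⟨j, hj, rfl⟩
          · exact absurd ⟨j, hj, rfl⟩ hb
      exact (hg'T b.1 hbT).symm
    · intro p hp
      obtain ⟨j, hjSi, hpj⟩ := hp
      have : p.1 ∉ Tset := by rw [hpj]; exact hinT j hjSi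
      exact hc p.1 this
    · intro p hp
      obtain ⟨j, hjSi, hpj⟩ := hp
      have hnT : p.1 ∉ Tset := by rw [hpj]; exact hinT j hjSi
      exact (hf'n p.1 hnT).trans (hg'n p.1 hnT).symm
  · rw [if_neg hc]
    push_neg at hc
    obtain ⟨l, hlT, hfg⟩ := hc
    cases l with
    | inl l' =>
      have hl' : l' ∉ ({i} : Set (Fin k)) := by
        intro h
        exact hlT (Or.inl (by rw [show l' = i from h]))
      rw [QQ_single U i f g, ind_neg (fun hcond => hfg (hcond l' hl')), zero_mul]
    | inr j =>
      have hj : j ∉ Si := by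
        intro h
        exact hlT (Or.inr ⟨j, h, rfl⟩)
      obtain ⟨Nj, hfac, -, -⟩ := hni j hj
      rw [QQ_single U i f g,
        hfac (restr (Sum.elim dB dA) Ki f) (restr (Sum.elim dB dA) Ki g)]
      rw [if_neg, mul_zero]
      intro hcond
      exact hfg (hcond ⟨Sum.inr j, trivial⟩ (fun hne => hne rfl))

end Acts
/-- **Factorization of a unitary channel from no-influence conditions.**
If, for each output `B i`, all inputs outside `S i` do not influence `B i`, then the
CJ operator of the unitary channel factorizes into pairwise commuting (padded) CJ
operators of channels `ρ_{B_i | S_i}` from the inputs in `S i` to the output `B i`. -/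
theorem unitary_channel_factorization
    (n k : ℕ) (dA : Fin n → ℕ) (dB : Fin k → ℕ)
    (hdim : ∏ j, dA j = ∏ i, dB i)
    (U : Matrix (Idx (Fin k) dB) (Idx (Fin n) dA) ℂ)
    (hU : IsUnitaryMat dB dA U)
    (S : Fin k → Set (Fin n))
    (hni : ∀ i : Fin k, ∀ j : Fin n, j ∉ S i → NoInfl dB dA U j {i}) :
    ∃ ρ : Fin k → Matrix (Idx (Fin k ⊕ Fin n) (Sum.elim dB dA))
                          (Idx (Fin k ⊕ Fin n) (Sum.elim dB dA)) ℂ,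
      -- each `ρ i` acts only on the output factor `B i` and the input factors in `S i`
      (∀ i, ActsOn (Sum.elim dB dA)
          {l | l = Sum.inl i ∨ ∃ j ∈ S i, l = Sum.inr j} (ρ i)) ∧
      -- each `ρ i` is (the padding of) the CJ operator of a channel into `B i`
      (∀ i, (ρ i).PosSemidef) ∧
      (∀ i, marg (Sum.elim dB dA) {l | l ≠ Sum.inl i} (ρ i) = 1) ∧
      -- they pairwise commute and their product is the CJ operator of the channel of `U`
      ∃ hc : ∀ i i', Commute (ρ i) (ρ i'),
        cjOp dB dA U = Finset.univ.noncommProd ρ fun a _ b _ _ => hc a b := by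
  by_cases hdeg : ∃ j : Fin n, dA j = 0
  · obtain ⟨j0, hj0⟩ := hdeg
    have hempty : ∀ f : Idx (Fin k ⊕ Fin n) (Sum.elim dB dA), False := by
      intro f
      have h2 : (f (Sum.inr j0)).1 < dA j0 := (f (Sum.inr j0)).2
      omega
    refine ⟨fun _ => 1, ?_, ?_, ?_, fun i i' => Commute.refl 1, ?_⟩
    · intro i
      exact ⟨1, fun f g => (hempty f).elim⟩
    · intro i
      exact Matrix.PosSemidef.one
    · intro i
      funext u v
      have h2 : (u ⟨Sum.inr j0, fun h => (by cases h)⟩).1 < dA j0 :=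
        (u ⟨Sum.inr j0, fun h => (by cases h)⟩).2
      omega
    · funext f
      exact (hempty f).elim
  · push_neg at hdeg
    have hpos : ∀ l : Fin k ⊕ Fin n, 0 < Sum.elim dB dA l := by
      intro l
      cases l with
      | inl b =>
        by_contra hb
        push_neg at hb
        have hb0 : dB b = 0 := Nat.le_zero.mp (by simpa using hb)
        have hprod : (∏ i, dB i) = 0 := Finset.prod_eq_zero (Finset.mem_univ b) hb0
        rw [← hdim] at hprod
        obtain ⟨j, -, hj⟩ := Finset.prod_eq_zero_iff.mp hprod
        exact hdeg j hj
      | inr j => exact Nat.pos_of_ne_zero (hdeg j)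
    refine ⟨fun i => QQ U {i}, fun i => QQ_actsOn U hpos i (S i) (hni i),
      fun i => QQ_posSemidef U {i}, fun i => QQ_marg_one U hU i,
      fun i i' => QQ_comm U hU i i', ?_⟩
    calc cjOp dB dA U = QQ U (↑(Finset.univ : Finset (Fin k)) : Set (Fin k)) := by
          rw [Finset.coe_univ]; exact (QQ_univ U).symm
      _ = _ := (QQ_noncommProd U hU Finset.univ).symm

end QCM
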